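/- arXiv:1405.4146 — 2 statements merged into one kernel-verified Lean document; each statement's English description precedes it below -/
import Mathlib

section
/- Suppose a symmetric matrix H(k) satisfies: H(k) is positive definite for all k, direction Δx(k) satisfies (Δx(k))ᵀ H(k) Δx(k) = −(Δx(k))ᵀ ∇f(x(k)) with ∇f(x(k)) ≠ 0, and f is twice continuously differentiable with ∇²f ⪯ λ_max(H(k))·I along the segment. Then the step-size ᾱ = 1/κ(H(k)) satisfies f(x(k) + ᾱΔx(k)) ≤ f(x(k)) − (1/(2κ(H(k))))·(Δx(k))ᵀ H(k) Δx(k), where κ(H) is the condition number of H. -/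
open scoped RealInnerProductSpace

private lemma taylor_key {n : ℕ} (f : EuclideanSpace ℝ (Fin n) → ℝ)
    (hf : ContDiff ℝ 2 f) (x v : EuclideanSpace ℝ (Fin n)) (C : ℝ)
    (hC : ∀ t ∈ Set.Icc (0 : ℝ) 1,
      ⟪(fderiv ℝ (gradient f) (x + t • v)) v, v⟫ ≤ C) :
    f (x + v) ≤ f x + ⟪gradient f x, v⟫ + C / 2 := by
  have hf1 : Differentiable ℝ f := hf.differentiable (by norm_num)
  have hgc : ContDiff ℝ 1 (gradient f) := by
    have h1 : ContDiff ℝ 1 (fderiv ℝ f) := hf.fderiv_right (by norm_num)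
    exact ((InnerProductSpace.toDual ℝ
      (EuclideanSpace ℝ (Fin n))).symm.contDiff.comp h1 : _)
  have hgd : Differentiable ℝ (gradient f) := hgc.differentiable (by norm_num)
  have hline : ∀ t : ℝ, HasDerivAt (fun t : ℝ => x + t • v) v t := by
    intro t
    simpa using ((hasDerivAt_id t).smul_const v).const_add x
  -- derivative of t ↦ f (x + t • v)
  have hA : ∀ t : ℝ, HasDerivAt (fun t : ℝ => f (x + t • v))
      ⟪gradient f (x + t • v), v⟫ t := by
    intro t
    have hg := (hf1 (x + t • v)).hasGradientAt
    have := hg.hasFDerivAt.comp_hasDerivAt t (hline t)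
    simpa only [InnerProductSpace.toDual_apply_apply, Function.comp_def] using this
  -- derivative of s ↦ ⟪gradient f (x + s • v), v⟫
  have hB : ∀ s : ℝ, HasDerivAt (fun s : ℝ => ⟪gradient f (x + s • v), v⟫)
      ⟪(fderiv ℝ (gradient f) (x + s • v)) v, v⟫ s := by
    intro s
    have hg := (hgd (x + s • v)).hasFDerivAt.comp_hasDerivAt s (hline s)
    have := (HasDerivAt.inner ℝ hg (hasDerivAt_const s v))
    simpa [real_inner_comm] using this
  set ψ : ℝ → ℝ := fun s => ⟪gradient f (x + s • v), v⟫ - C * s with hψ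
  have hψd : ∀ s : ℝ, HasDerivAt ψ
      (⟪(fderiv ℝ (gradient f) (x + s • v)) v, v⟫ - C) s := by
    intro s
    exact ((hB s).sub ((hasDerivAt_id s).const_mul C)).congr_deriv (by ring)
  have hψanti : AntitoneOn ψ (Set.Icc 0 1) := by
    apply antitoneOn_of_deriv_nonpos (convex_Icc 0 1)
    · exact fun s _ => ((hψd s).continuousAt).continuousWithinAt
    · exact fun s _ => ((hψd s).differentiableAt).differentiableWithinAt
    · intro s hs
      rw [interior_Icc] at hs
      rw [(hψd s).deriv]
      have := hC s ⟨hs.1.le, hs.2.le⟩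
      linarith
  set g0 : ℝ := ⟪gradient f x, v⟫ with hg0
  set φ : ℝ → ℝ := fun t => f (x + t • v) - f x - t * g0 - C / 2 * t ^ 2 with hφ
  have hφd : ∀ t : ℝ, HasDerivAt φ
      (⟪gradient f (x + t • v), v⟫ - g0 - C * t) t := by
    intro t
    have h1 := ((hA t).sub_const (f x)).sub ((hasDerivAt_id t).mul_const g0)
    have h2 := (hasDerivAt_pow 2 t).const_mul (C / 2)
    have := h1.sub h2
    exact this.congr_deriv (by ring)
  have hφanti : AntitoneOn φ (Set.Icc 0 1) := by
    apply antitoneOn_of_deriv_nonpos (convex_Icc 0 1)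
    · exact fun t _ => ((hφd t).continuousAt).continuousWithinAt
    · exact fun t _ => ((hφd t).differentiableAt).differentiableWithinAt
    · intro t ht
      rw [interior_Icc] at ht
      rw [(hφd t).deriv]
      have h1 : ψ t ≤ ψ 0 :=
        hψanti (Set.left_mem_Icc.2 one_pos.le) ⟨ht.1.le, ht.2.le⟩ ht.1.le
      simp only [hψ, zero_smul, add_zero, mul_zero, sub_zero] at h1
      simp only [hg0]
      linarith
  have := hφanti (Set.left_mem_Icc.2 one_pos.le) (Set.right_mem_Icc.2 one_pos.le)
    zero_le_one
  simp only [hφ, one_smul, zero_smul, add_zero, one_pow, mul_one, zero_mul,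
    mul_zero, sub_zero, zero_pow, sub_self] at this
  linarith

theorem linesearch_decrease {n : ℕ} (f : EuclideanSpace ℝ (Fin n) → ℝ)
    (H : EuclideanSpace ℝ (Fin n) →L[ℝ] EuclideanSpace ℝ (Fin n))
    (x Δx : EuclideanSpace ℝ (Fin n)) (lmin lmax : ℝ)
    (hf : ContDiff ℝ 2 f)
    (hsym : ∀ u v, ⟪H u, v⟫ = ⟪u, H v⟫)
    (hlmin : 0 < lmin)
    (hmin : ∀ v, lmin * ‖v‖ ^ 2 ≤ ⟪H v, v⟫)
    (hmax : ∀ v, ⟪H v, v⟫ ≤ lmax * ‖v‖ ^ 2)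
    (hgrad : gradient f x ≠ 0)
    (hdir : ⟪Δx, H Δx⟫ = -⟪Δx, gradient f x⟫)
    (hhess : ∀ t ∈ Set.Icc (0 : ℝ) 1, ∀ v,
      ⟪(fderiv ℝ (gradient f) (x + t • Δx)) v, v⟫ ≤ lmax * ‖v‖ ^ 2) :
    f (x + (1 / (lmax / lmin)) • Δx) ≤ f x - 1 / (2 * (lmax / lmin)) * ⟪Δx, H Δx⟫ := by
  -- lmin ≤ lmax, lmax > 0
  have hg2 : (0:ℝ) < ‖gradient f x‖ ^ 2 := by
    have := norm_pos_iff.mpr hgrad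
    positivity
  have hle : lmin ≤ lmax := by
    have := (hmin (gradient f x)).trans (hmax (gradient f x))
    exact le_of_mul_le_mul_right this hg2
  have hlmax : 0 < lmax := lt_of_lt_of_le hlmin hle
  set α : ℝ := lmin / lmax with hα
  have hα0 : 0 < α := div_pos hlmin hlmax
  have hα1 : α ≤ 1 := (div_le_one hlmax).2 hle
  set v : EuclideanSpace ℝ (Fin n) := α • Δx with hv
  set q : ℝ := ⟪Δx, H Δx⟫ with hq
  have hΔ2 : lmin * ‖Δx‖ ^ 2 ≤ q :=
    le_of_le_of_eq (hmin Δx) (real_inner_comm _ _)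
  have hq0 : 0 ≤ q := le_trans (by positivity) hΔ2
  -- apply taylor_key
  have key := taylor_key f hf x v (lmax * ‖v‖ ^ 2) ?_
  · have hinner : ⟪gradient f x, v⟫ = -(α * q) := by
      have h1 : ⟪Δx, gradient f x⟫ = -q := by
        rw [hq] at hdir ⊢; linarith [hdir]
      rw [hv, real_inner_smul_right, real_inner_comm, h1]; ring
    have hnv : ‖v‖ ^ 2 = α ^ 2 * ‖Δx‖ ^ 2 := by
      rw [hv, norm_smul, mul_pow, Real.norm_eq_abs, sq_abs]
    have hC : lmax * ‖v‖ ^ 2 / 2 ≤ α * q / 2 := by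
      rw [hnv]
      have h2 : lmax * (α ^ 2 * ‖Δx‖ ^ 2) = α * (lmin * ‖Δx‖ ^ 2) := by
        rw [hα]; field_simp
      rw [h2]
      have := mul_le_mul_of_nonneg_left hΔ2 hα0.le
      linarith
    have hgoal1 : (1 : ℝ) / (lmax / lmin) = α := by
      rw [one_div_div, hα]
    have hgoal2 : (1 : ℝ) / (2 * (lmax / lmin)) = α / 2 := by
      rw [hα]; field_simp
    rw [hgoal1, hgoal2, ← hv]
    rw [hinner] at key
    linarith
  · intro t ht
    have hpt : x + t • v = x + (t * α) • Δx := by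
      rw [hv, smul_smul]
    rw [hpt]
    exact hhess (t * α) ⟨mul_nonneg ht.1 hα0.le,
      mul_le_one₀ ht.2 hα0.le hα1⟩ v
end

section
/- Let f : ℝⁿ → ℝ be twice continuously differentiable with ∇²f Lipschitz continuous (constant L), let x* satisfy ∇f(x*) = 0 with ∇²f(x*) positive definite, and let iterates satisfy x^{k+1} = x^k + Δx^k where ‖∇²f(x^k)Δx^k + ∇f(x^k)‖₂ ≤ η_k ‖∇f(x^k)‖₂ with η_k → 0. Then if x^k → x*, the convergence is superlinear: ‖x^{k+1} − x*‖ / ‖x^k − x*‖ → 0. -/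
open scoped RealInnerProductSpace

set_option maxHeartbeats 1000000 in
/-- Taylor-type bound from a Lipschitz derivative. -/
lemma taylor_aux {E F : Type*} [NormedAddCommGroup E] [NormedSpace ℝ E]
    [NormedAddCommGroup F] [NormedSpace ℝ F]
    (g : E → F) (hg : Differentiable ℝ g) (L : ℝ) (hL : 0 ≤ L)
    (hlip : ∀ a b, ‖fderiv ℝ g a - fderiv ℝ g b‖ ≤ L * ‖a - b‖) (a y : E) :
    ‖g y - g a - (fderiv ℝ g a) (y - a)‖ ≤ (L * ‖y - a‖) * ‖y - a‖ := by
  apply Convex.norm_image_sub_le_of_norm_fderiv_le'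
    (fun z _ => hg z) ?_ (convex_segment a y) (left_mem_segment ℝ a y)
    (right_mem_segment ℝ a y)
  intro z hz
  rcases hz with ⟨s, t, hs, ht, hst, rfl⟩
  have hzx : (s • a + t • y) - a = t • (y - a) := by
    have : s = 1 - t := by linarith
    subst this
    module
  calc ‖fderiv ℝ g (s • a + t • y) - fderiv ℝ g a‖
      ≤ L * ‖(s • a + t • y) - a‖ := hlip _ _
    _ = L * (t * ‖y - a‖) := by rw [hzx, norm_smul, Real.norm_of_nonneg ht]
    _ ≤ L * ‖y - a‖ := by
        have ht1 : t ≤ 1 := by linarith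
        have : t * ‖y - a‖ ≤ ‖y - a‖ := by nlinarith [norm_nonneg (y - a)]
        nlinarith

set_option maxHeartbeats 1000000 in
set_option synthInstance.maxHeartbeats 400000 in
theorem inexact_newton_superlinear {n : ℕ} (f : EuclideanSpace ℝ (Fin n) → ℝ)
    (L : ℝ) (hL : 0 < L) (hf : ContDiff ℝ 2 f)
    (hlip : ∀ x y, ‖fderiv ℝ (gradient f) x - fderiv ℝ (gradient f) y‖ ≤ L * ‖x - y‖)
    (xs : EuclideanSpace ℝ (Fin n)) (hcrit : gradient f xs = 0)
    (hpd : ∀ v, v ≠ 0 → 0 < ⟪(fderiv ℝ (gradient f) xs) v, v⟫)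
    (x Δx : ℕ → EuclideanSpace ℝ (Fin n)) (η : ℕ → ℝ) (hη0 : ∀ k, 0 ≤ η k)
    (hη : Filter.Tendsto η Filter.atTop (nhds 0))
    (hstep : ∀ k, x (k + 1) = x k + Δx k)
    (hres : ∀ k, ‖(fderiv ℝ (gradient f) (x k)) (Δx k) + gradient f (x k)‖
      ≤ η k * ‖gradient f (x k)‖)
    (hconv : Filter.Tendsto x Filter.atTop (nhds xs)) :
    Filter.Tendsto (fun k => ‖x (k + 1) - xs‖ / ‖x k - xs‖) Filter.atTop (nhds 0) := by
  set g : EuclideanSpace ℝ (Fin n) → EuclideanSpace ℝ (Fin n) := gradient f with hg_def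
  set H : EuclideanSpace ℝ (Fin n) → (EuclideanSpace ℝ (Fin n) →L[ℝ] EuclideanSpace ℝ (Fin n)) :=
    fderiv ℝ g with hH_def
  set S : EuclideanSpace ℝ (Fin n) →L[ℝ] EuclideanSpace ℝ (Fin n) := H xs with hS_def
  -- gradient is differentiable
  have hg_smooth : ContDiff ℝ 1 g := by
    have h1 : ContDiff ℝ 1 (fderiv ℝ f) := hf.fderiv_right (by norm_num)
    have h2 : g = fun z => (InnerProductSpace.toDual ℝ (EuclideanSpace ℝ (Fin n))).symm
        (fderiv ℝ f z) := rfl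
    rw [h2]
    exact (InnerProductSpace.toDual ℝ (EuclideanSpace ℝ (Fin n))).symm.contDiff.comp h1
  have hg_diff : Differentiable ℝ g := hg_smooth.differentiable one_ne_zero
  -- S is injective, get lower bound m
  have hinj : Function.Injective S := by
    intro a b hab
    by_contra hne
    have h := hpd (a - b) (sub_ne_zero.mpr hne)
    rw [map_sub, hab, sub_self] at h
    simp at h
  obtain ⟨m, hm, hml⟩ : ∃ m : ℝ, 0 < m ∧ ∀ v, m * ‖v‖ ≤ ‖S v‖ := by
    have hsurj : Function.Surjective S.toLinearMap :=
      LinearMap.injective_iff_surjective.mp hinj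
    let e : EuclideanSpace ℝ (Fin n) ≃ₗ[ℝ] EuclideanSpace ℝ (Fin n) :=
      LinearEquiv.ofBijective S.toLinearMap ⟨hinj, hsurj⟩
    let e' := e.toContinuousLinearEquiv
    have hanti := e'.antilipschitz
    set K : NNReal := ‖(e'.symm : EuclideanSpace ℝ (Fin n) →L[ℝ] EuclideanSpace ℝ (Fin n))‖₊
      with hK_def
    have hK0 : (0:ℝ) ≤ K := K.coe_nonneg
    refine ⟨((K : ℝ) + 1)⁻¹, inv_pos.mpr (by linarith), fun v => ?_⟩
    have h1 : ‖v‖ ≤ (K : ℝ) * ‖e' v‖ := by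
      have := hanti.le_mul_dist v 0
      simpa [dist_eq_norm] using this
    have h2 : e' v = S v := rfl
    rw [h2] at h1
    rw [inv_mul_le_iff₀ (by linarith)]
    nlinarith [norm_nonneg (S v)]
  -- error converges to zero
  have herr : Filter.Tendsto (fun k => ‖x k - xs‖) Filter.atTop (nhds 0) := by
    have h := hconv.sub (tendsto_const_nhds (x := xs))
    rw [sub_self] at h
    exact tendsto_zero_iff_norm_tendsto_zero.mp h
  -- the bounding sequence
  set b : ℕ → ℝ := fun k =>
    (2 / m) * (L * ‖x k - xs‖ + η k * (‖S‖ + L * ‖x k - xs‖)) with hb_def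
  have hb_tendsto : Filter.Tendsto b Filter.atTop (nhds 0) := by
    have h1 : Filter.Tendsto (fun k => L * ‖x k - xs‖) Filter.atTop (nhds 0) := by
      simpa using herr.const_mul L
    have h2 : Filter.Tendsto (fun k => η k * (‖S‖ + L * ‖x k - xs‖))
        Filter.atTop (nhds 0) := by
      have := hη.mul ((tendsto_const_nhds (x := ‖S‖)).add h1)
      simpa using this
    have := (h1.add h2).const_mul (2 / m)
    simpa using this
  -- eventually small
  have hev : ∀ᶠ k in Filter.atTop, L * ‖x k - xs‖ ≤ m / 2 := by
    have h := herr.eventually_le_const (show (0:ℝ) < m / (2 * L) by positivity)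
    filter_upwards [h] with k hk
    have h1 : L * ‖x k - xs‖ ≤ L * (m / (2 * L)) :=
      mul_le_mul_of_nonneg_left hk hL.le
    have h2 : L * (m / (2 * L)) = m / 2 := by field_simp
    linarith
  -- main bound
  have hbound : ∀ᶠ k in Filter.atTop, ‖x (k + 1) - xs‖ / ‖x k - xs‖ ≤ b k := by
    filter_upwards [hev] with k hk
    have hb_nonneg : 0 ≤ b k := by
      have hη0k := hη0 k
      have hSn := norm_nonneg S
      have hen := norm_nonneg (x k - xs)
      have hmul : 0 ≤ L * ‖x k - xs‖ + η k * (‖S‖ + L * ‖x k - xs‖) := by positivity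
      rw [hb_def]
      positivity
    rcases eq_or_ne ‖x k - xs‖ 0 with h0 | h0
    · rw [h0]
      simpa using hb_nonneg
    have hpos : 0 < ‖x k - xs‖ := lt_of_le_of_ne (norm_nonneg _) (Ne.symm h0)
    -- lower bound on H(x k)
    have hHk_low : ∀ v, (m / 2) * ‖v‖ ≤ ‖H (x k) v‖ := by
      intro v
      have h4 : ‖xs - x k‖ = ‖x k - xs‖ := norm_sub_rev _ _
      have h1 : ‖S v - H (x k) v‖ ≤ (L * ‖x k - xs‖) * ‖v‖ := by
        have h2 : ‖S - H (x k)‖ ≤ L * ‖x k - xs‖ := by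
          rw [hS_def, ← h4]
          exact hlip xs (x k)
        calc ‖S v - H (x k) v‖ = ‖(S - H (x k)) v‖ := by simp
          _ ≤ ‖S - H (x k)‖ * ‖v‖ := (S - H (x k)).le_opNorm v
          _ ≤ (L * ‖x k - xs‖) * ‖v‖ := mul_le_mul_of_nonneg_right h2 (norm_nonneg v)
      have h5 := hml v
      have h6 : ‖S v‖ - ‖H (x k) v‖ ≤ ‖S v - H (x k) v‖ := norm_sub_norm_le _ _
      have h7 : (L * ‖x k - xs‖) * ‖v‖ ≤ (m / 2) * ‖v‖ :=
        mul_le_mul_of_nonneg_right hk (norm_nonneg v)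
      nlinarith [norm_nonneg v]
    -- Taylor at x k evaluated at xs
    have htay1 : ‖H (x k) (x k - xs) - g (x k)‖ ≤ (L * ‖x k - xs‖) * ‖x k - xs‖ := by
      have ht := taylor_aux g hg_diff L hL.le (fun a c => hlip a c) (x k) xs
      have heq : g xs - g (x k) - (fderiv ℝ g (x k)) (xs - x k)
          = H (x k) (x k - xs) - g (x k) := by
        rw [hcrit]
        have h8 : xs - x k = -(x k - xs) := by abel
        rw [h8, map_neg]
        abel
      rw [heq] at ht
      have hn : ‖xs - x k‖ = ‖x k - xs‖ := norm_sub_rev _ _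
      rwa [hn] at ht
    -- Taylor at xs evaluated at x k : bound ‖g (x k)‖
    have htay2 : ‖g (x k)‖ ≤ (‖S‖ + L * ‖x k - xs‖) * ‖x k - xs‖ := by
      have ht := taylor_aux g hg_diff L hL.le (fun a c => hlip a c) xs (x k)
      rw [hcrit] at ht
      have hSb : ‖S (x k - xs)‖ ≤ ‖S‖ * ‖x k - xs‖ := S.le_opNorm _
      calc ‖g (x k)‖ = ‖(g (x k) - 0 - (fderiv ℝ g xs) (x k - xs))
            + S (x k - xs)‖ := by
            congr 1
            show _ = _ + (fderiv ℝ g xs) (x k - xs)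
            abel
        _ ≤ ‖g (x k) - 0 - (fderiv ℝ g xs) (x k - xs)‖ + ‖S (x k - xs)‖ :=
            norm_add_le _ _
        _ ≤ (L * ‖x k - xs‖) * ‖x k - xs‖ + ‖S‖ * ‖x k - xs‖ := add_le_add ht hSb
        _ = (‖S‖ + L * ‖x k - xs‖) * ‖x k - xs‖ := by ring
    -- combine
    have hstep' : x (k + 1) - xs = (x k - xs) + Δx k := by rw [hstep k]; abel
    have hcomb : (m / 2) * ‖x (k + 1) - xs‖
        ≤ (L * ‖x k - xs‖ + η k * (‖S‖ + L * ‖x k - xs‖)) * ‖x k - xs‖ := by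
      have h1 := hHk_low (x (k + 1) - xs)
      have h2 : ‖H (x k) (x (k + 1) - xs)‖
          ≤ η k * ‖g (x k)‖ + (L * ‖x k - xs‖) * ‖x k - xs‖ := by
        have heq2 : H (x k) (x (k + 1) - xs)
            = (H (x k) (Δx k) + g (x k)) + (H (x k) (x k - xs) - g (x k)) := by
          rw [hstep', map_add]; abel
        rw [heq2]
        calc ‖(H (x k) (Δx k) + g (x k)) + (H (x k) (x k - xs) - g (x k))‖
            ≤ ‖H (x k) (Δx k) + g (x k)‖ + ‖H (x k) (x k - xs) - g (x k)‖ :=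
              norm_add_le _ _
          _ ≤ η k * ‖g (x k)‖ + (L * ‖x k - xs‖) * ‖x k - xs‖ :=
              add_le_add (hres k) htay1
      have h3 : η k * ‖g (x k)‖ ≤ η k * ((‖S‖ + L * ‖x k - xs‖) * ‖x k - xs‖) :=
        mul_le_mul_of_nonneg_left htay2 (hη0 k)
      calc (m / 2) * ‖x (k + 1) - xs‖ ≤ ‖H (x k) (x (k + 1) - xs)‖ := h1
        _ ≤ η k * ‖g (x k)‖ + (L * ‖x k - xs‖) * ‖x k - xs‖ := h2
        _ ≤ η k * ((‖S‖ + L * ‖x k - xs‖) * ‖x k - xs‖)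
            + (L * ‖x k - xs‖) * ‖x k - xs‖ := by linarith
        _ = (L * ‖x k - xs‖ + η k * (‖S‖ + L * ‖x k - xs‖)) * ‖x k - xs‖ := by ring
    rw [div_le_iff₀ hpos, hb_def]
    calc ‖x (k + 1) - xs‖
        = (2 / m) * ((m / 2) * ‖x (k + 1) - xs‖) := by field_simp
      _ ≤ (2 / m) * ((L * ‖x k - xs‖ + η k * (‖S‖ + L * ‖x k - xs‖)) * ‖x k - xs‖) :=
          mul_le_mul_of_nonneg_left hcomb (by positivity)
      _ = (2 / m) * (L * ‖x k - xs‖ + η k * (‖S‖ + L * ‖x k - xs‖)) * ‖x k - xs‖ := by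
          ring
  -- squeeze
  have hnn : ∀ᶠ k in Filter.atTop, 0 ≤ ‖x (k + 1) - xs‖ / ‖x k - xs‖ :=
    Filter.Eventually.of_forall fun k => div_nonneg (norm_nonneg _) (norm_nonneg _)
  exact squeeze_zero' hnn hbound hb_tendsto
end
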